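/- Let ν be a probability measure on a measurable space β, let C ≥ 0, and let κ be a Markov kernel from β to ℝ such that for every b ∈ β and all reals x ≤ y, κ(b)(Ioo x y) ≤ C·(y − x) (i.e., each κ(b) has a Lebesgue density bounded by C and no point masses). Let h, g : β → ℝ be measurable with g − h square-integrable with respect to ν. Then the measure, under the joint law ν ⊗ κ on β × ℝ, of the event {(b, a) : h(b) < a < g(b)} is at most C·∫ |h(b) − g(b)| dν(b), which in turn is at most C·(∫ (h(b) − g(b))² dν(b))^{1/2}. -/

import Mathlib

open MeasureTheory ProbabilityTheory Set

/-- indicator L² lemma, Lemma 7 of the appendix: if the conditional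
distribution `κ b` of `A` given `B = b` satisfies `κ b (Ioo x y) ≤ C⬝(y - x)` (density
bounded by `C`, no point masses), then the joint probability of `{h(B) < A < g(B)}` is at
most `C⬝∫ |h - g| dν ≤ C⬝‖h - g‖_{L²(ν)}`. -/
theorem indicator_L2_lemma
    {β : Type*} [MeasurableSpace β] (ν : Measure β) [IsProbabilityMeasure ν]
    (C : ℝ) (hC : 0 ≤ C) (κ : Kernel β ℝ) [IsMarkovKernel κ]
    (hκ : ∀ b : β, ∀ x y : ℝ, x ≤ y → κ b (Ioo x y) ≤ ENNReal.ofReal (C * (y - x)))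
    (h g : β → ℝ) (hh : Measurable h) (hg : Measurable g)
    (hL2 : MemLp (fun b => g b - h b) 2 ν) :
    (ν.compProd κ) {p : β × ℝ | h p.1 < p.2 ∧ p.2 < g p.1} ≤
        ENNReal.ofReal (C * ∫ b, |h b - g b| ∂ν) ∧
      C * ∫ b, |h b - g b| ∂ν ≤ C * (∫ b, (h b - g b) ^ 2 ∂ν) ^ (1/2 : ℝ) := by
  have habs : (fun b => |h b - g b|) = fun b => ‖g b - h b‖ := by
    funext b; rw [Real.norm_eq_abs, abs_sub_comm]
  have hint : Integrable (fun b => |h b - g b|) ν := by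
    rw [habs]
    exact (hL2.integrable one_le_two).norm
  constructor
  · have hs : MeasurableSet {p : β × ℝ | h p.1 < p.2 ∧ p.2 < g p.1} := by
      exact (measurableSet_lt (hh.comp measurable_fst) measurable_snd).inter
        (measurableSet_lt measurable_snd (hg.comp measurable_fst))
    rw [Measure.compProd_apply hs]
    have hpre : ∀ b : β, (Prod.mk b ⁻¹' {p : β × ℝ | h p.1 < p.2 ∧ p.2 < g p.1})
        = Ioo (h b) (g b) := fun b => rfl
    calc ∫⁻ b, κ b (Prod.mk b ⁻¹' {p : β × ℝ | h p.1 < p.2 ∧ p.2 < g p.1}) ∂ν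
        ≤ ∫⁻ b, ENNReal.ofReal (C * |h b - g b|) ∂ν := by
          refine lintegral_mono fun b => ?_
          rw [hpre]
          rcases le_or_gt (h b) (g b) with hle | hlt
          · calc κ b (Ioo (h b) (g b)) ≤ ENNReal.ofReal (C * (g b - h b)) :=
                hκ b _ _ hle
              _ = ENNReal.ofReal (C * |h b - g b|) := by
                rw [abs_sub_comm, abs_of_nonneg (by linarith)]
          · rw [Ioo_eq_empty (by exact not_lt.mpr hlt.le), measure_empty]
            exact bot_le
      _ = ENNReal.ofReal (C * ∫ b, |h b - g b| ∂ν) := by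
          rw [← ofReal_integral_eq_lintegral_ofReal (hint.const_mul C)
            (Filter.Eventually.of_forall fun b => mul_nonneg hC (abs_nonneg _)),
            integral_const_mul]
  · refine mul_le_mul_of_nonneg_left ?_ hC
    have hpq : Real.HolderConjugate 2 2 := by
      constructor <;> norm_num
    have hf2 : MemLp (fun b => |h b - g b|) (ENNReal.ofReal 2) ν := by
      rw [habs, show ENNReal.ofReal 2 = 2 by norm_num]
      exact hL2.norm
    have hg2 : MemLp (fun _ : β => (1 : ℝ)) (ENNReal.ofReal 2) ν := memLp_const 1
    have := integral_mul_le_Lp_mul_Lq_of_nonneg hpq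
      (Filter.Eventually.of_forall fun b => abs_nonneg (h b - g b))
      (Filter.Eventually.of_forall fun _ => zero_le_one) hf2 hg2
    simp only [mul_one, Real.rpow_two, sq_abs, one_pow, integral_const, measure_univ,
      ENNReal.toReal_one, smul_eq_mul, Real.one_rpow, probReal_univ] at this
    exact this
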